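/- Let σ : G ⇢ L be a regular support, with r = rk(L). Then for every g ∈ G and every j ∈ {0,…,r}, Σ_{χ ∈ Ĝ : ω_{σ*}(χ) = j} χ(g) = |G| · Σ_{s=0}^{r} γ_σ(r−s)^{−1} · μ_L(r−j, r−s) · μ_≥(r−s, ω_σ(g)) · μ_≤(r−j, r−s). Consequently the pair (ω_σ, ω_{σ*}) is compatible and its Krawtchouk coefficients are K(ω_σ, ω_{σ*})(i,j) = |G| Σ_{s=0}^{r} γ_σ(r−s)^{−1} μ_L(r−j, r−s) μ_≥(r−s, i) μ_≤(r−j, r−s). -/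
import Mathlib


open Finset
open scoped Classical Pointwise

section CharAux
variable {G : Type*} [AddCommGroup G]

/-- Equivalence between `ℂˣ`-valued and `ℂ`-valued additive characters. -/
noncomputable def unitsCharEquiv : AddChar G ℂˣ ≃ AddChar G ℂ where
  toFun χ := (Units.coeHom ℂ).compAddChar χ
  invFun ψ :=
    { toFun := fun a => Units.mk (ψ a) (ψ (-a))
        (by rw [← AddChar.map_add_eq_mul, add_neg_cancel, AddChar.map_zero_eq_one])
        (by rw [← AddChar.map_add_eq_mul, neg_add_cancel, AddChar.map_zero_eq_one])
      map_zero_eq_one' := Units.ext (by simp)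
      map_add_eq_mul' := fun a b => Units.ext (by simp [AddChar.map_add_eq_mul]) }
  left_inv χ := DFunLike.ext _ _ fun a => Units.ext rfl
  right_inv ψ := DFunLike.ext _ _ fun a => rfl

variable [Fintype G] [Fintype (AddChar G ℂˣ)]

lemma sum_char_units (a : G) :
    ∑ χ : AddChar G ℂˣ, ((χ a : ℂˣ) : ℂ) = if a = 0 then (Fintype.card G : ℂ) else 0 := by
  classical
  rw [← AddChar.sum_apply_eq_ite]
  exact Fintype.sum_equiv unitsCharEquiv _ _ (fun χ => rfl)

omit [Fintype (AddChar G ℂˣ)] in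
lemma sum_char_on_subgroup (H : AddSubgroup G) (χ : AddChar G ℂˣ) :
    ∑ h : H, ((χ (h : G) : ℂˣ) : ℂ)
      = if (∀ h ∈ H, χ h = 1) then (Nat.card H : ℂ) else 0 := by
  classical
  have : ∑ h : H, ((χ (h : G) : ℂˣ) : ℂ)
      = ∑ h : H, ((Units.coeHom ℂ).compAddChar (χ.compAddMonoidHom H.subtype)) h := rfl
  rw [this, AddChar.sum_eq_ite]
  have hiff : ((Units.coeHom ℂ).compAddChar (χ.compAddMonoidHom H.subtype) = 0)
      ↔ (∀ h ∈ H, χ h = 1) := by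
    rw [DFunLike.ext_iff]
    constructor
    · intro h x hx
      have := h ⟨x, hx⟩
      exact Units.ext (by simpa using this)
    · intro h x
      have := h x x.2
      simpa using congrArg Units.val this
  rw [Nat.card_eq_fintype_card]
  exact if_congr hiff rfl rfl

lemma char_sum_subgroup (H : AddSubgroup G) (g : G) :
    (Nat.card H : ℂ) *
        ∑ χ : AddChar G ℂˣ, (if (∀ h ∈ H, χ h = 1) then ((χ g : ℂˣ) : ℂ) else 0)
      = if g ∈ H then (Fintype.card G : ℂ) else 0 := by
  classical
  rw [Finset.mul_sum]
  have step : ∀ χ : AddChar G ℂˣ,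
      (Nat.card H : ℂ) * (if (∀ h ∈ H, χ h = 1) then ((χ g : ℂˣ) : ℂ) else 0)
        = ∑ h : H, ((χ ((h : G) + g) : ℂˣ) : ℂ) := by
    intro χ
    have : ∑ h : H, ((χ ((h : G) + g) : ℂˣ) : ℂ)
        = (∑ h : H, ((χ (h : G) : ℂˣ) : ℂ)) * ((χ g : ℂˣ) : ℂ) := by
      rw [Finset.sum_mul]
      refine Finset.sum_congr rfl fun h _ => ?_
      rw [AddChar.map_add_eq_mul]; push_cast; ring
    rw [this, sum_char_on_subgroup H χ, ite_mul, zero_mul, mul_ite, mul_zero]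
  rw [Finset.sum_congr rfl fun χ _ => step χ, Finset.sum_comm]
  have inner : ∀ h : H, ∑ χ : AddChar G ℂˣ, ((χ ((h : G) + g) : ℂˣ) : ℂ)
      = if (h : G) + g = 0 then (Fintype.card G : ℂ) else 0 := fun h => sum_char_units _
  rw [Finset.sum_congr rfl fun h _ => inner h]
  by_cases hg : g ∈ H
  · rw [if_pos hg]
    rw [Fintype.sum_eq_single (⟨-g, neg_mem hg⟩ : H)]
    · rw [if_pos (by simp)]
    · intro b hb
      rw [if_neg]
      intro hb0
      exact hb (Subtype.ext (eq_neg_of_add_eq_zero_left hb0))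
  · rw [if_neg hg]
    refine Finset.sum_eq_zero fun h _ => if_neg fun h0 => ?_
    have : (h : G) = -g := eq_neg_of_add_eq_zero_left h0
    exact hg (by simpa [this] using neg_mem h.2)
end CharAux

/-- A finite graded lattice of rank `r` (with rank function `ρ`) that is *regular*:
the counting numbers `μ_≤`, `μ_≥` and the Möbius numbers `μ_L` depend only on ranks. -/
structure RegularLattice (L : Type*) [Lattice L] [BoundedOrder L] [Fintype L] where
  /-- the rank of the lattice -/
  r : ℕ
  /-- the rank function -/
  ρ : L → ℕ
  ρ_bot : ρ ⊥ = 0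
  ρ_top : ρ ⊤ = r
  ρ_covby : ∀ S T : L, S ⋖ T → ρ T = ρ S + 1
  /-- the Möbius function of the lattice -/
  mu : L → L → ℤ
  mu_self : ∀ S : L, mu S S = 1
  mu_sum : ∀ S T : L, S < T → mu S T = - ∑ U : L, (if S ≤ U ∧ U < T then mu S U else 0)
  /-- `μ_≤ s t` : the number of elements of rank `s` below an element of rank `t` -/
  muLE : ℕ → ℕ → ℕ
  card_le : ∀ (s : ℕ) (T : L), Nat.card {S : L // ρ S = s ∧ S ≤ T} = muLE s (ρ T)
  /-- `μ_≥ s t` : the number of elements of rank `s` above an element of rank `t` -/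
  muGE : ℕ → ℕ → ℕ
  card_ge : ∀ (s : ℕ) (T : L), Nat.card {S : L // ρ S = s ∧ T ≤ S} = muGE s (ρ T)
  /-- `μ_L s t` : the common value of the Möbius function on pairs of ranks `s ≤ t`,
  with the convention `μ_L s t = 0` for `s > t` -/
  muN : ℕ → ℕ → ℤ
  mu_eq : ∀ S T : L, S ≤ T → mu S T = muN (ρ S) (ρ T)
  muN_zero : ∀ s t : ℕ, t < s → muN s t = 0

section LatAux
variable {L : Type*} [Lattice L] [BoundedOrder L] [Fintype L] (RL : RegularLattice L)

lemma RegularLattice.rho_lt_of_lt : ∀ {S T : L}, S < T → RL.ρ S < RL.ρ T := by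
  haveI : IsStronglyAtomic L := IsStronglyAtomic.of_wellFounded_lt wellFounded_lt
  have key : ∀ S : L, ∀ T, S < T → RL.ρ S < RL.ρ T := by
    refine fun S => WellFounded.induction (wellFounded_gt)
      (C := fun S => ∀ T, S < T → RL.ρ S < RL.ρ T) S ?_
    intro S ih T hST
    obtain ⟨c, hc, hcT⟩ := hST.exists_covby_le
    have hρc : RL.ρ c = RL.ρ S + 1 := RL.ρ_covby S c hc
    rcases eq_or_lt_of_le hcT with rfl | hlt
    · omega
    · have := ih c hc.lt T hlt
      omega
  exact fun {S T} h => key S T h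

lemma RegularLattice.rho_mono {S T : L} (h : S ≤ T) : RL.ρ S ≤ RL.ρ T := by
  rcases eq_or_lt_of_le h with rfl | h
  · exact le_rfl
  · exact (RL.rho_lt_of_lt h).le

lemma RegularLattice.rho_le_r (S : L) : RL.ρ S ≤ RL.r :=
  RL.ρ_top ▸ RL.rho_mono le_top

lemma RegularLattice.mu_interval (S U : L) :
    ∑ T : L, (if S ≤ T ∧ T ≤ U then RL.mu S T else 0) = if S = U then 1 else 0 := by
  by_cases hSU : S ≤ U
  · rcases eq_or_lt_of_le hSU with rfl | hlt
    · rw [if_pos rfl, Fintype.sum_eq_single S]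
      · rw [if_pos ⟨le_rfl, le_rfl⟩, RL.mu_self]
      · intro T hT
        rw [if_neg]
        rintro ⟨h1, h2⟩
        exact hT (le_antisymm h2 h1)
    · rw [if_neg hlt.ne]
      have split : ∀ T : L, (if S ≤ T ∧ T ≤ U then RL.mu S T else 0)
          = (if S ≤ T ∧ T < U then RL.mu S T else 0) + (if T = U then RL.mu S T else 0) := by
        intro T
        by_cases h1 : T = U
        · subst h1
          rw [if_pos ⟨hSU, le_rfl⟩, if_neg (by simp), if_pos rfl, zero_add]
        · rw [if_neg h1, add_zero]
          exact if_congr (and_congr_right fun _ => ⟨fun h => lt_of_le_of_ne h h1,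
            fun h => h.le⟩) rfl rfl
      rw [Finset.sum_congr rfl fun T _ => split T, Finset.sum_add_distrib]
      have h2 : ∑ T : L, (if T = U then RL.mu S T else 0) = RL.mu S U := by simp
      rw [h2, RL.mu_sum S U hlt]
      ring
  · rw [if_neg (by rintro rfl; exact hSU le_rfl)]
    refine Finset.sum_eq_zero fun T _ => if_neg ?_
    rintro ⟨h1, h2⟩
    exact hSU (h1.trans h2)
end LatAux

/-- A regular support `σ : G ⇢ L` on a finite abelian group `G` with values in a
regular lattice `L`, together with its cardinality invariant `γ`. -/
structure RegularSupport (L : Type*) [Lattice L] [BoundedOrder L] [Fintype L]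
    (G : Type*) [AddCommGroup G] [Fintype G] (RL : RegularLattice L) where
  /-- the support function -/
  σ : G → L
  supp_zero : ∀ g : G, σ g = ⊥ ↔ g = 0
  supp_neg : ∀ g : G, σ (-g) = σ g
  supp_add : ∀ g₁ g₂ : G, σ (g₁ + g₂) ≤ σ g₁ ⊔ σ g₂
  supp_sup : ∀ S₁ S₂ : L,
    {g : G | σ g ≤ S₁ ⊔ S₂} = {g : G | σ g ≤ S₁} + {g : G | σ g ≤ S₂}
  /-- `γ s` : the common cardinality of `G_σ(S)` over elements `S` of rank `s` -/
  γ : ℕ → ℕ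
  card_supp : ∀ S : L, Nat.card {g : G // σ g ≤ S} = γ (RL.ρ S)

/-- The dual support `σ* : Ĝ → L`, `σ*(χ) = ⋁ {S ∈ L : χ ∈ G_σ(S)*}`. -/
noncomputable def RegularSupport.dualSupp {L : Type*} [Lattice L] [BoundedOrder L] [Fintype L]
    {G : Type*} [AddCommGroup G] [Fintype G] {RL : RegularLattice L}
    (RS : RegularSupport L G RL) (χ : AddChar G ℂˣ) : L :=
  (Finset.univ.filter (fun S : L => ∀ g : G, RS.σ g ≤ S → χ g = 1)).sup id

section SuppAux
variable {L : Type*} [Lattice L] [BoundedOrder L] [Fintype L]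
  {G : Type*} [AddCommGroup G] [Fintype G] {RL : RegularLattice L}
  (RS : RegularSupport L G RL)

/-- `G_σ(S)` as an additive subgroup. -/
def RegularSupport.suppSubgroup (S : L) : AddSubgroup G where
  carrier := {g | RS.σ g ≤ S}
  zero_mem' := by
    have h0 : RS.σ 0 = ⊥ := (RS.supp_zero 0).mpr rfl
    simp [Set.mem_setOf_eq, h0]
  add_mem' := fun {a b} ha hb => le_trans (RS.supp_add a b) (sup_le ha hb)
  neg_mem' := fun {a} ha => by
    show RS.σ (-a) ≤ S
    rw [RS.supp_neg]
    exact ha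

lemma RegularSupport.mem_suppSubgroup {g : G} {S : L} :
    g ∈ RS.suppSubgroup S ↔ RS.σ g ≤ S := Iff.rfl

lemma RegularSupport.card_suppSubgroup (S : L) :
    Nat.card (RS.suppSubgroup S) = RS.γ (RL.ρ S) := by
  rw [← RS.card_supp S]
  exact Nat.card_congr (Equiv.subtypeEquivRight fun g => Iff.rfl)

lemma RegularSupport.gamma_pos (S : L) : 0 < RS.γ (RL.ρ S) := by
  rw [← RS.card_supp S]
  have : Nonempty {g : G // RS.σ g ≤ S} :=
    ⟨⟨0, by rw [(RS.supp_zero 0).mpr rfl]; exact bot_le⟩⟩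
  exact Nat.card_pos

lemma RegularSupport.dual_spec (χ : AddChar G ℂˣ) :
    ∀ g : G, RS.σ g ≤ RS.dualSupp χ → χ g = 1 := by
  show (fun X : L => ∀ g : G, RS.σ g ≤ X → χ g = 1)
    ((Finset.univ.filter (fun S : L => ∀ g : G, RS.σ g ≤ S → χ g = 1)).sup id)
  refine Finset.sup_induction (p := fun X : L => ∀ g : G, RS.σ g ≤ X → χ g = 1) ?_ ?_ ?_
  · intro g hg
    have : g = 0 := (RS.supp_zero g).mp (le_bot_iff.mp hg)
    simp [this]
  · intro S₁ h₁ S₂ h₂ g hg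
    have hmem : g ∈ {g : G | RS.σ g ≤ S₁} + {g : G | RS.σ g ≤ S₂} := by
      rw [← RS.supp_sup]; exact hg
    obtain ⟨a, ha, b, hb, hab⟩ := hmem
    rw [← hab, AddChar.map_add_eq_mul, h₁ a ha, h₂ b hb, one_mul]
  · intro S hS
    exact (Finset.mem_filter.mp hS).2

lemma RegularSupport.le_dualSupp_iff (χ : AddChar G ℂˣ) (S : L) :
    S ≤ RS.dualSupp χ ↔ ∀ g : G, RS.σ g ≤ S → χ g = 1 :=
  ⟨fun hS g hg => RS.dual_spec χ g (hg.trans hS),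
   fun h => Finset.le_sup (f := id) (Finset.mem_filter.mpr ⟨Finset.mem_univ _, h⟩)⟩

variable [Fintype (AddChar G ℂˣ)]

/-- `A(S) = Σ_{χ : S ≤ σ*(χ)} χ(g)`. -/
noncomputable def RegularSupport.AA (g : G) (T : L) : ℂ :=
  ∑ χ : AddChar G ℂˣ, if T ≤ RS.dualSupp χ then ((χ g : ℂˣ) : ℂ) else 0

/-- `N(S) = Σ_{χ : σ*(χ) = S} χ(g)`. -/
noncomputable def RegularSupport.NN (g : G) (S : L) : ℂ :=
  ∑ χ : AddChar G ℂˣ, if RS.dualSupp χ = S then ((χ g : ℂˣ) : ℂ) else 0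

lemma RegularSupport.AA_eq (g : G) (T : L) :
    RS.AA g T = (RS.γ (RL.ρ T) : ℂ)⁻¹
      * (if RS.σ g ≤ T then (Fintype.card G : ℂ) else 0) := by
  have hγ : (RS.γ (RL.ρ T) : ℂ) ≠ 0 := Nat.cast_ne_zero.mpr (RS.gamma_pos T).ne'
  have h := char_sum_subgroup (RS.suppSubgroup T) g
  rw [RS.card_suppSubgroup] at h
  have e1 : ∀ χ : AddChar G ℂˣ,
      (if (∀ h ∈ RS.suppSubgroup T, χ h = 1) then ((χ g : ℂˣ) : ℂ) else 0)
        = (if T ≤ RS.dualSupp χ then ((χ g : ℂˣ) : ℂ) else 0) := by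
    intro χ
    refine if_congr ?_ rfl rfl
    rw [RS.le_dualSupp_iff χ T]
    exact ⟨fun h g hg => h g hg, fun h g hg => h g hg⟩
  rw [Finset.sum_congr rfl fun χ _ => e1 χ] at h
  have hgmem : (g ∈ RS.suppSubgroup T) = (RS.σ g ≤ T) := rfl
  rw [hgmem] at h
  rw [RegularSupport.AA, ← h, inv_mul_cancel_left₀ hγ]

lemma RegularSupport.NN_eq (g : G) (S : L) :
    RS.NN g S = ∑ T : L, if S ≤ T then (RL.mu S T : ℂ) * RS.AA g T else 0 := by
  have expand : ∀ T : L, (if S ≤ T then (RL.mu S T : ℂ) * RS.AA g T else 0)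
      = ∑ χ : AddChar G ℂˣ,
          (if S ≤ T ∧ T ≤ RS.dualSupp χ then (RL.mu S T : ℂ) * ((χ g : ℂˣ) : ℂ) else 0) := by
    intro T
    by_cases h : S ≤ T
    · simp only [if_pos h, RegularSupport.AA, Finset.mul_sum, mul_ite, mul_zero, h, true_and,
        if_true]
    · simp [h]
  rw [Finset.sum_congr rfl fun T _ => expand T, Finset.sum_comm]
  refine Finset.sum_congr rfl fun χ _ => ?_
  have hmu : ∑ T : L, (if S ≤ T ∧ T ≤ RS.dualSupp χ then (RL.mu S T : ℂ) else 0)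
      = if S = RS.dualSupp χ then 1 else 0 := by
    have h2 := congrArg (fun z : ℤ => (z : ℂ)) (RL.mu_interval S (RS.dualSupp χ))
    push_cast at h2
    simpa [apply_ite (fun z : ℤ => (z : ℂ))] using h2
  calc (if RS.dualSupp χ = S then ((χ g : ℂˣ) : ℂ) else 0)
      = (if S = RS.dualSupp χ then 1 else 0) * ((χ g : ℂˣ) : ℂ) := by
        by_cases h : S = RS.dualSupp χ
        · rw [if_pos h, if_pos h.symm, one_mul]
        · rw [if_neg h, if_neg fun hh => h hh.symm, zero_mul]
    _ = (∑ T : L, (if S ≤ T ∧ T ≤ RS.dualSupp χ then (RL.mu S T : ℂ) else 0))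
          * ((χ g : ℂˣ) : ℂ) := by rw [hmu]
    _ = ∑ T : L, (if S ≤ T ∧ T ≤ RS.dualSupp χ
          then (RL.mu S T : ℂ) * ((χ g : ℂˣ) : ℂ) else 0) := by
        rw [Finset.sum_mul]
        exact Finset.sum_congr rfl fun T _ => by rw [ite_mul, zero_mul]

lemma RegularSupport.main_formula (g : G) (j : ℕ) (hj : j ≤ RL.r) :
    ∑ χ : AddChar G ℂˣ,
        (if RL.r - RL.ρ (RS.dualSupp χ) = j then ((χ g : ℂˣ) : ℂ) else 0)
      = (Fintype.card G : ℂ)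
          * ∑ s ∈ Finset.range (RL.r + 1),
              ((RS.γ (RL.r - s) : ℂ))⁻¹ * (RL.muN (RL.r - j) (RL.r - s) : ℂ)
                * (RL.muGE (RL.r - s) (RL.ρ (RS.σ g)) : ℂ)
                * (RL.muLE (RL.r - j) (RL.r - s) : ℂ) := by
  classical
  -- Step 0 : regroup by the value of the dual support
  have h0 : ∑ χ : AddChar G ℂˣ,
        (if RL.r - RL.ρ (RS.dualSupp χ) = j then ((χ g : ℂˣ) : ℂ) else 0)
      = ∑ S : L, (if RL.ρ S = RL.r - j then RS.NN g S else 0) := by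
    have hcond : ∀ χ : AddChar G ℂˣ,
        (RL.r - RL.ρ (RS.dualSupp χ) = j) ↔ (RL.ρ (RS.dualSupp χ) = RL.r - j) := by
      intro χ
      have := RL.rho_le_r (RS.dualSupp χ)
      omega
    calc ∑ χ : AddChar G ℂˣ,
          (if RL.r - RL.ρ (RS.dualSupp χ) = j then ((χ g : ℂˣ) : ℂ) else 0)
        = ∑ χ : AddChar G ℂˣ,
            (if RL.ρ (RS.dualSupp χ) = RL.r - j then ((χ g : ℂˣ) : ℂ) else 0) :=
          Finset.sum_congr rfl fun χ _ => if_congr (hcond χ) rfl rfl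
      _ = ∑ χ : AddChar G ℂˣ, ∑ S : L,
            (if RS.dualSupp χ = S ∧ RL.ρ S = RL.r - j then ((χ g : ℂˣ) : ℂ) else 0) := by
          refine Finset.sum_congr rfl fun χ _ => ?_
          symm
          simp only [ite_and]
          rw [Finset.sum_ite_eq]
          simp
      _ = ∑ S : L, ∑ χ : AddChar G ℂˣ,
            (if RS.dualSupp χ = S ∧ RL.ρ S = RL.r - j then ((χ g : ℂˣ) : ℂ) else 0) :=
          Finset.sum_comm
      _ = ∑ S : L, (if RL.ρ S = RL.r - j then RS.NN g S else 0) := by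
          refine Finset.sum_congr rfl fun S _ => ?_
          by_cases hS : RL.ρ S = RL.r - j
          · simp [hS, RegularSupport.NN]
          · simp [hS]
  rw [h0]
  -- Step 1 : Möbius inversion
  have h1 : ∑ S : L, (if RL.ρ S = RL.r - j then RS.NN g S else 0)
      = ∑ T : L, (∑ S : L, if RL.ρ S = RL.r - j ∧ S ≤ T then (RL.mu S T : ℂ) else 0)
          * RS.AA g T := by
    calc ∑ S : L, (if RL.ρ S = RL.r - j then RS.NN g S else 0)
        = ∑ S : L, ∑ T : L,
            (if RL.ρ S = RL.r - j ∧ S ≤ T then (RL.mu S T : ℂ) * RS.AA g T else 0) := by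
          refine Finset.sum_congr rfl fun S _ => ?_
          by_cases hS : RL.ρ S = RL.r - j
          · rw [if_pos hS, RS.NN_eq g S]
            exact Finset.sum_congr rfl fun T _ => by simp [hS]
          · simp [hS]
      _ = ∑ T : L, ∑ S : L,
            (if RL.ρ S = RL.r - j ∧ S ≤ T then (RL.mu S T : ℂ) * RS.AA g T else 0) :=
          Finset.sum_comm
      _ = ∑ T : L, (∑ S : L, if RL.ρ S = RL.r - j ∧ S ≤ T then (RL.mu S T : ℂ) else 0)
            * RS.AA g T := by
          refine Finset.sum_congr rfl fun T _ => ?_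
          rw [Finset.sum_mul]
          exact Finset.sum_congr rfl fun S _ => by rw [ite_mul, zero_mul]
  rw [h1]
  -- Step 2 : count the inner Möbius sum
  have h2 : ∀ T : L, (∑ S : L, if RL.ρ S = RL.r - j ∧ S ≤ T then (RL.mu S T : ℂ) else 0)
      = (RL.muLE (RL.r - j) (RL.ρ T) : ℂ) * (RL.muN (RL.r - j) (RL.ρ T) : ℂ) := by
    intro T
    have e : ∀ S : L, (if RL.ρ S = RL.r - j ∧ S ≤ T then (RL.mu S T : ℂ) else 0)
        = (if RL.ρ S = RL.r - j ∧ S ≤ T then ((RL.muN (RL.r - j) (RL.ρ T) : ℂ)) else 0) := by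
      intro S
      by_cases h : RL.ρ S = RL.r - j ∧ S ≤ T
      · rw [if_pos h, if_pos h, RL.mu_eq S T h.2, h.1]
      · rw [if_neg h, if_neg h]
    have hc : (Finset.univ.filter fun S : L => RL.ρ S = RL.r - j ∧ S ≤ T).card
        = RL.muLE (RL.r - j) (RL.ρ T) := by
      rw [← RL.card_le (RL.r - j) T, Nat.card_eq_fintype_card, Fintype.card_subtype]
    rw [Finset.sum_congr rfl fun S _ => e S, Finset.sum_ite, Finset.sum_const_zero,
      add_zero, Finset.sum_const, hc, nsmul_eq_mul]
  -- Step 3 : substitute the value of A and put each term in indicator form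
  have h3 : ∀ T : L,
      (∑ S : L, if RL.ρ S = RL.r - j ∧ S ≤ T then (RL.mu S T : ℂ) else 0) * RS.AA g T
      = (if RS.σ g ≤ T then
          (Fintype.card G : ℂ) * ((RS.γ (RL.ρ T) : ℂ))⁻¹
            * (RL.muN (RL.r - j) (RL.ρ T) : ℂ) * (RL.muLE (RL.r - j) (RL.ρ T) : ℂ)
        else 0) := by
    intro T
    rw [h2 T, RS.AA_eq g T]
    by_cases h : RS.σ g ≤ T
    · rw [if_pos h, if_pos h]; ring
    · rw [if_neg h, if_neg h, mul_zero, mul_zero]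
  rw [Finset.sum_congr rfl fun T _ => h3 T]
  -- Step 4 : group by rank and count
  have h4 : ∑ T : L, (if RS.σ g ≤ T then
        (Fintype.card G : ℂ) * ((RS.γ (RL.ρ T) : ℂ))⁻¹
          * (RL.muN (RL.r - j) (RL.ρ T) : ℂ) * (RL.muLE (RL.r - j) (RL.ρ T) : ℂ)
      else 0)
      = ∑ t ∈ Finset.range (RL.r + 1), (RL.muGE t (RL.ρ (RS.σ g)) : ℂ)
          * ((Fintype.card G : ℂ) * ((RS.γ t : ℂ))⁻¹
            * (RL.muN (RL.r - j) t : ℂ) * (RL.muLE (RL.r - j) t : ℂ)) := by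
    rw [← Finset.sum_fiberwise_of_maps_to (g := RL.ρ) (t := Finset.range (RL.r + 1))
      (fun T _ => Finset.mem_range.mpr (Nat.lt_succ_of_le (RL.rho_le_r T)))]
    refine Finset.sum_congr rfl fun t _ => ?_
    have hcard : (Finset.univ.filter fun T : L => RL.ρ T = t ∧ RS.σ g ≤ T).card
        = RL.muGE t (RL.ρ (RS.σ g)) := by
      rw [← RL.card_ge t (RS.σ g), Nat.card_eq_fintype_card, Fintype.card_subtype]
    calc ∑ T ∈ Finset.univ.filter (fun T : L => RL.ρ T = t),
          (if RS.σ g ≤ T then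
            (Fintype.card G : ℂ) * ((RS.γ (RL.ρ T) : ℂ))⁻¹
              * (RL.muN (RL.r - j) (RL.ρ T) : ℂ) * (RL.muLE (RL.r - j) (RL.ρ T) : ℂ)
          else 0)
        = ∑ T ∈ Finset.univ.filter (fun T : L => RL.ρ T = t ∧ RS.σ g ≤ T),
            ((Fintype.card G : ℂ) * ((RS.γ t : ℂ))⁻¹
              * (RL.muN (RL.r - j) t : ℂ) * (RL.muLE (RL.r - j) t : ℂ)) := by
          rw [← Finset.sum_filter, Finset.filter_filter]
          refine Finset.sum_congr rfl fun T hT => ?_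
          rw [(Finset.mem_filter.mp hT).2.1]
      _ = _ := by
          rw [Finset.sum_const, hcard, nsmul_eq_mul]
  rw [h4]
  -- Step 5 : reindex `t = r - s`
  rw [Finset.mul_sum, ← Finset.sum_range_reflect]
  refine Finset.sum_congr rfl fun s hs => ?_
  have hs' : s ≤ RL.r := Nat.lt_succ_iff.mp (Finset.mem_range.mp hs)
  have e : RL.r + 1 - 1 - s = RL.r - s := by omega
  rw [e]
  ring

end SuppAux

/-- For every `g ∈ G` and every `0 ≤ j ≤ r`,
`Σ_{χ : ω_{σ*}(χ) = j} χ(g) = |G| Σ_{s=0}^r γ_σ(r−s)⁻¹ μ_L(r−j,r−s) μ_≥(r−s, ω_σ(g)) μ_≤(r−j,r−s)`.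
Consequently the pair `(ω_σ, ω_{σ*})` is compatible (the first conjunct) with these
sums as Krawtchouk coefficients `K(ω_σ, ω_{σ*})(i, j)` for `i = ω_σ(g)`.
Here `ω_σ(g) = ρ(σ(g))` and `ω_{σ*}(χ) = r − ρ(σ*(χ))`. -/
theorem stmt_9 {L : Type*} [Lattice L] [BoundedOrder L] [Fintype L]
    {G : Type*} [AddCommGroup G] [Fintype G] [Fintype (AddChar G ℂˣ)]
    {RL : RegularLattice L} (RS : RegularSupport L G RL) :
    (∀ g₁ g₂ : G, RL.ρ (RS.σ g₁) = RL.ρ (RS.σ g₂) →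
      ∀ j : ℕ,
        ∑ χ : AddChar G ℂˣ,
            (if RL.r - RL.ρ (RS.dualSupp χ) = j then ((χ g₁ : ℂˣ) : ℂ) else 0)
          = ∑ χ : AddChar G ℂˣ,
              (if RL.r - RL.ρ (RS.dualSupp χ) = j then ((χ g₂ : ℂˣ) : ℂ) else 0)) ∧
    (∀ g : G, ∀ j : ℕ, j ≤ RL.r →
      ∑ χ : AddChar G ℂˣ,
          (if RL.r - RL.ρ (RS.dualSupp χ) = j then ((χ g : ℂˣ) : ℂ) else 0)
        = (Fintype.card G : ℂ)
            * ∑ s ∈ Finset.range (RL.r + 1),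
                ((RS.γ (RL.r - s) : ℂ))⁻¹ * (RL.muN (RL.r - j) (RL.r - s) : ℂ)
                  * (RL.muGE (RL.r - s) (RL.ρ (RS.σ g)) : ℂ)
                  * (RL.muLE (RL.r - j) (RL.r - s) : ℂ)) := by
  constructor
  · intro g₁ g₂ hρ j
    by_cases hj : j ≤ RL.r
    · rw [RS.main_formula g₁ j hj, RS.main_formula g₂ j hj, hρ]
    · have hz : ∀ g : G, ∑ χ : AddChar G ℂˣ,
          (if RL.r - RL.ρ (RS.dualSupp χ) = j then ((χ g : ℂˣ) : ℂ) else 0) = 0 := by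
        intro g
        refine Finset.sum_eq_zero fun χ _ => if_neg fun h => hj ?_
        omega
      rw [hz g₁, hz g₂]
  · exact fun g j hj => RS.main_formula g j hj
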